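/- For a uniformly random n×m Toeplitz matrix G over F_2 used as the generator matrix of a binary linear code with rate R = n/m, and any δ ∈ (0, 1/2), the probability that the minimum relative distance of the code is at most δ is bounded above by 2^{-m(1 - H₂(δ) - R)}, where H₂ is the binary entropy function. -/

import Mathlib

/-- The binary entropy function `H₂(δ) = -δ log₂ δ - (1-δ) log₂ (1-δ)`. -/
noncomputable def binEnt (δ : ℝ) : ℝ :=
  -δ * Real.logb 2 δ - (1 - δ) * Real.logb 2 (1 - δ)

/-- The `n × m` Toeplitz matrix over `F₂` determined by its first row and
first column, i.e. by `n + m - 1` entries: `G i j = t (i - j + (m-1))`. -/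
def toeplitz (n m : ℕ) (t : Fin (n + m - 1) → ZMod 2) :
    Matrix (Fin n) (Fin m) (ZMod 2) :=
  fun i j => t ⟨i.val + (m - 1) - j.val, by
    have hi := i.isLt; have hj := j.isLt; omega⟩

/-- Toeplitz Gilbert–Varshamov bound: for a uniformly random `n × m` Toeplitz
matrix `G` over `F₂` (rate `R = n/m`, `n < m`) and `δ ∈ (0, 1/2)`, the
probability that the code `{xG}` has minimum relative distance at most `δ`
(i.e. some nonzero input has codeword of Hamming weight `≤ δ m`) is at most
`2^{-m (1 - H₂(δ) - R)}`. -/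
noncomputable def Lmap (n m : ℕ) (x : Fin n → ZMod 2) :
    (Fin (n + m - 1) → ZMod 2) →ₗ[ZMod 2] (Fin m → ZMod 2) where
  toFun t := Matrix.vecMul x (toeplitz n m t)
  map_add' t t' := by
    funext j
    simp [Matrix.vecMul, dotProduct, toeplitz, mul_add, Finset.sum_add_distrib]
  map_smul' r t := by
    funext j
    simp [Matrix.vecMul, dotProduct, toeplitz, Finset.mul_sum]
    exact Finset.sum_congr rfl fun i _ => by ring

lemma Lmap_apply (n m : ℕ) (x : Fin n → ZMod 2) (t : Fin (n + m - 1) → ZMod 2) (j : Fin m) :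
    Lmap n m x t j = ∑ i : Fin n, x i * t ⟨i.val + (m - 1) - j.val, by
      have := i.isLt; have := j.isLt; omega⟩ := by
  simp [Lmap, Matrix.vecMul, dotProduct, toeplitz]

lemma Lmap_surj (n m : ℕ) (hm : 0 < m) (x : Fin n → ZMod 2) (hx : x ≠ 0) :
    Function.Surjective (Lmap n m x) := by
  classical
  -- maximal index with x i ≠ 0
  have hne : (Finset.univ.filter (fun i => x i ≠ 0)).Nonempty := by
    rcases Function.ne_iff.mp hx with ⟨i, hi⟩
    exact ⟨i, by simpa using hi⟩
  set i0 : Fin n := (Finset.univ.filter (fun i => x i ≠ 0)).max' hne with hi0def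
  have hxi0 : x i0 ≠ 0 := by
    have := (Finset.univ.filter (fun i => x i ≠ 0)).max'_mem hne
    simpa using this
  have hmax : ∀ i : Fin n, x i ≠ 0 → i ≤ i0 := fun i hi =>
    Finset.le_max' _ i (by simpa using hi)
  -- the window embedding
  have hwin : ∀ u : Fin m, (i0 : ℕ) + u.val < n + m - 1 ∨ (n + m - 1 = 0) := by
    intro u; have := i0.isLt; have := u.isLt; omega
  have hn : 0 < n := i0.pos
  have hlt : ∀ u : Fin m, (i0 : ℕ) + u.val < n + m - 1 := by
    intro u; have := i0.isLt; have := u.isLt; omega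
  let ext : (Fin m → ZMod 2) → (Fin (n + m - 1) → ZMod 2) := fun s k =>
    if h : (i0 : ℕ) ≤ k.val ∧ k.val < (i0 : ℕ) + m then s ⟨k.val - i0, by omega⟩ else 0
  -- Φ kills only 0
  have hker : ∀ s : Fin m → ZMod 2, Lmap n m x (ext s) = 0 → s = 0 := by
    intro s hs
    by_contra hsne
    have hsne' : (Finset.univ.filter (fun u => s u ≠ 0)).Nonempty := by
      rcases Function.ne_iff.mp hsne with ⟨u, hu⟩
      exact ⟨u, by simpa using hu⟩
    set u0 : Fin m := (Finset.univ.filter (fun u => s u ≠ 0)).min' hsne' with hu0def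
    have hsu0 : s u0 ≠ 0 := by
      have := (Finset.univ.filter (fun u => s u ≠ 0)).min'_mem hsne'
      simpa using this
    have hmin : ∀ u : Fin m, s u ≠ 0 → u0 ≤ u := fun u hu =>
      Finset.min'_le _ u (by simpa using hu)
    -- evaluate at coordinate j = m-1-u0
    have hj : (m - 1 - u0.val) < m := by have := u0.isLt; omega
    have h0 : Lmap n m x (ext s) ⟨m - 1 - u0.val, hj⟩ = 0 := by rw [hs]; rfl
    rw [Lmap_apply] at h0
    have hsingle : ∀ i : Fin n, i ∈ Finset.univ → i ≠ i0 →
        x i * ext s ⟨i.val + (m - 1) - (m - 1 - u0.val), by have := i.isLt; have := u0.isLt; omega⟩ = 0 := by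
      intro i _ hine
      by_cases hxi : x i = 0
      · simp [hxi]
      · have hile : i < i0 := lt_of_le_of_ne (hmax i hxi) hine
        have hkval : i.val + (m - 1) - (m - 1 - u0.val) = i.val + u0.val := by
          have := u0.isLt; omega
        have hival : i.val < i0.val := hile
        show x i * ext s ⟨i.val + (m - 1) - (m - 1 - u0.val), _⟩ = 0
        simp only [ext]
        by_cases hcond : (i0 : ℕ) ≤ i.val + (m - 1) - (m - 1 - u0.val) ∧
            i.val + (m - 1) - (m - 1 - u0.val) < (i0 : ℕ) + m
        · rw [dif_pos hcond]
          have hzero : s ⟨i.val + (m - 1) - (m - 1 - u0.val) - i0, by omega⟩ = 0 := by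
            by_contra hnz
            have hle := hmin _ hnz
            rw [Fin.le_def] at hle
            simp only [Fin.val_mk] at hle
            omega
          rw [hzero, mul_zero]
        · rw [dif_neg hcond, mul_zero]
    rw [Finset.sum_eq_single i0 hsingle (by simp)] at h0
    have hidx : (⟨(i0 : ℕ) + (m - 1) - (m - 1 - u0.val), by
        have := i0.isLt; have := u0.isLt; omega⟩ : Fin (n + m - 1))
        = ⟨(i0 : ℕ) + u0.val, hlt u0⟩ := by
      apply Fin.ext
      show (i0 : ℕ) + (m - 1) - (m - 1 - u0.val) = (i0 : ℕ) + u0.val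
      have := u0.isLt; omega
    rw [hidx] at h0
    have hext : ext s ⟨(i0 : ℕ) + u0.val, hlt u0⟩ = s u0 := by
      simp only [ext]
      rw [dif_pos ⟨by omega, by have := u0.isLt; omega⟩]
      congr 1
      apply Fin.ext; simp
    rw [hext] at h0
    exact mul_ne_zero hxi0 hsu0 h0
  -- ext is compatible with subtraction
  have hext_sub : ∀ s1 s2 : Fin m → ZMod 2, ext (s1 - s2) = ext s1 - ext s2 := by
    intro s1 s2
    funext k
    simp only [ext, Pi.sub_apply]
    by_cases h : (i0 : ℕ) ≤ k.val ∧ k.val < (i0 : ℕ) + m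
    · simp only [dif_pos h]
    · simp only [dif_neg h]; simp
  have hΦinj : Function.Injective (fun s => Lmap n m x (ext s)) := by
    intro s1 s2 h12
    have h12' : Lmap n m x (ext s1) = Lmap n m x (ext s2) := h12
    have : Lmap n m x (ext (s1 - s2)) = 0 := by
      rw [hext_sub, map_sub, h12', sub_self]
    have := hker _ this
    exact sub_eq_zero.mp this
  have hΦsurj : Function.Surjective (fun s => Lmap n m x (ext s)) :=
    Finite.injective_iff_surjective.mp hΦinj
  intro c
  obtain ⟨s, hs⟩ := hΦsurj c
  exact ⟨ext s, hs⟩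

lemma fiber_card (n m : ℕ) (hm : 0 < m) (x : Fin n → ZMod 2) (hx : x ≠ 0)
    (c : Fin m → ZMod 2) :
    Nat.card {t : Fin (n + m - 1) → ZMod 2 // Matrix.vecMul x (toeplitz n m t) = c}
      = 2 ^ (n - 1) := by
  classical
  have hn : 0 < n := by
    rcases Function.ne_iff.mp hx with ⟨i, _⟩; exact i.pos
  have hsurj := Lmap_surj n m hm x hx
  have key : ∀ c : Fin m → ZMod 2,
      Nat.card {t // Matrix.vecMul x (toeplitz n m t) = c}
        = Nat.card {t // Matrix.vecMul x (toeplitz n m t) = (0 : Fin m → ZMod 2)} := by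
    intro c
    obtain ⟨t0, ht0⟩ := hsurj c
    have ht0' : Matrix.vecMul x (toeplitz n m t0) = c := ht0
    refine Nat.card_congr
      { toFun := fun t => ⟨t.1 - t0, ?_⟩
        invFun := fun t => ⟨t.1 + t0, ?_⟩
        left_inv := fun t => by ext1; simp
        right_inv := fun t => by ext1; simp }
    · show Lmap n m x (t.1 - t0) = 0
      have h1 : Lmap n m x t.1 = c := t.2
      rw [map_sub, h1, ht0, sub_self]
    · show Lmap n m x (t.1 + t0) = c
      have h1 : Lmap n m x t.1 = 0 := t.2
      rw [map_add, h1, ht0, zero_add]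
  have htot : (2 : ℕ) ^ (n + m - 1)
      = 2 ^ m * Nat.card {t // Matrix.vecMul x (toeplitz n m t) = (0 : Fin m → ZMod 2)} := by
    have h2 : Fintype.card (Σ c : Fin m → ZMod 2,
        {t // Matrix.vecMul x (toeplitz n m t) = c})
        = Fintype.card (Fin (n + m - 1) → ZMod 2) :=
      Fintype.card_congr (Equiv.sigmaFiberEquiv (fun t => Matrix.vecMul x (toeplitz n m t)))
    rw [Fintype.card_sigma] at h2
    have h3 : ∀ c : Fin m → ZMod 2,
        Fintype.card {t // Matrix.vecMul x (toeplitz n m t) = c}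
          = Nat.card {t // Matrix.vecMul x (toeplitz n m t) = (0 : Fin m → ZMod 2)} := by
      intro c
      rw [← Nat.card_eq_fintype_card]; exact key c
    simp only [h3] at h2
    rw [Finset.sum_const, Finset.card_univ] at h2
    simp only [Fintype.card_fun, Fintype.card_fin, ZMod.card] at h2
    rw [← h2, smul_eq_mul]
  rw [key c]
  have hpow : (2 : ℕ) ^ (n + m - 1) = 2 ^ m * 2 ^ (n - 1) := by
    rw [← pow_add]; congr 1; omega
  rw [hpow] at htot
  exact (Nat.eq_of_mul_eq_mul_left (Nat.pow_pos (by norm_num : 0 < 2)) htot.symm)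

open Finset in
lemma ball_card (m K : ℕ) :
    (Finset.univ.filter (fun c : Fin m → ZMod 2 => hammingNorm c ≤ K)).card
      ≤ ∑ k ∈ Finset.range (K + 1), m.choose k := by
  classical
  have hinj : ∀ c ∈ Finset.univ.filter (fun c : Fin m → ZMod 2 => hammingNorm c ≤ K),
      (Finset.univ.filter (fun j => c j ≠ 0)) ∈
        (Finset.range (K + 1)).biUnion (fun k => Finset.powersetCard k Finset.univ) := by
    intro c hc
    rw [Finset.mem_filter] at hc
    rw [Finset.mem_biUnion]
    refine ⟨hammingNorm c, Finset.mem_range.mpr (by omega), ?_⟩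
    rw [Finset.mem_powersetCard]
    exact ⟨Finset.subset_univ _, rfl⟩
  have := Finset.card_le_card_of_injOn
    (f := fun c : Fin m → ZMod 2 => Finset.univ.filter (fun j => c j ≠ 0)) hinj ?_
  · refine this.trans ?_
    refine (Finset.card_biUnion_le).trans ?_
    apply Finset.sum_le_sum
    intro k _
    rw [Finset.card_powersetCard, Finset.card_univ, Fintype.card_fin]
  · intro c1 h1 c2 h2 he
    funext j
    have h01 : ∀ a : ZMod 2, a = 0 ∨ a = 1 := by decide
    have hj : (j ∈ Finset.univ.filter (fun j => c1 j ≠ 0))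
        ↔ (j ∈ Finset.univ.filter (fun j => c2 j ≠ 0)) := by
      simp only at he; rw [he]
    simp only [Finset.mem_filter, Finset.mem_univ, true_and] at hj
    rcases h01 (c1 j) with h | h <;> rcases h01 (c2 j) with h' | h' <;>
      simp [h, h'] at hj ⊢

lemma card_bad_le (n m : ℕ) (hm : 0 < m) (K : ℕ) :
    Nat.card {t : Fin (n + m - 1) → ZMod 2 // ∃ x : Fin n → ZMod 2, x ≠ 0 ∧
        hammingNorm (Matrix.vecMul x (toeplitz n m t)) ≤ K}
      ≤ 2 ^ n * ((∑ k ∈ Finset.range (K + 1), m.choose k) * 2 ^ (n - 1)) := by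
  classical
  rw [Nat.card_eq_fintype_card, Fintype.card_subtype]
  have hsub : (Finset.univ.filter fun t : Fin (n + m - 1) → ZMod 2 =>
        ∃ x : Fin n → ZMod 2, x ≠ 0 ∧ hammingNorm (Matrix.vecMul x (toeplitz n m t)) ≤ K)
      ⊆ Finset.univ.biUnion (fun x : Fin n → ZMod 2 =>
          Finset.univ.filter (fun t => x ≠ 0 ∧
            hammingNorm (Matrix.vecMul x (toeplitz n m t)) ≤ K)) := by
    intro t ht
    rw [Finset.mem_filter] at ht
    obtain ⟨_, x, hx, hw⟩ := ht
    exact Finset.mem_biUnion.mpr ⟨x, Finset.mem_univ x, by simp [hx, hw]⟩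
  refine (Finset.card_le_card hsub).trans ?_
  refine (Finset.card_biUnion_le).trans ?_
  have hcard : ∀ x : Fin n → ZMod 2,
      (Finset.univ.filter (fun t => x ≠ 0 ∧
          hammingNorm (Matrix.vecMul x (toeplitz n m t)) ≤ K)).card
        ≤ (∑ k ∈ Finset.range (K + 1), m.choose k) * 2 ^ (n - 1) := by
    intro x
    by_cases hx : x = 0
    · simp [hx]
    · have hsub2 : (Finset.univ.filter (fun t => x ≠ 0 ∧
            hammingNorm (Matrix.vecMul x (toeplitz n m t)) ≤ K))
          ⊆ (Finset.univ.filter (fun c : Fin m → ZMod 2 => hammingNorm c ≤ K)).biUnion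
              (fun c => Finset.univ.filter
                (fun t => Matrix.vecMul x (toeplitz n m t) = c)) := by
        intro t ht
        rw [Finset.mem_filter] at ht
        refine Finset.mem_biUnion.mpr ⟨Matrix.vecMul x (toeplitz n m t), by simp [ht.2.2], by simp⟩
      refine (Finset.card_le_card hsub2).trans ?_
      refine (Finset.card_biUnion_le).trans ?_
      have hfib : ∀ c : Fin m → ZMod 2,
          (Finset.univ.filter (fun t => Matrix.vecMul x (toeplitz n m t) = c)).card
            = 2 ^ (n - 1) := by
        intro c
        rw [← Fintype.card_subtype, ← Nat.card_eq_fintype_card]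
        exact fiber_card n m hm x hx c
      calc ∑ c ∈ Finset.univ.filter (fun c : Fin m → ZMod 2 => hammingNorm c ≤ K),
            (Finset.univ.filter (fun t => Matrix.vecMul x (toeplitz n m t) = c)).card
          = (Finset.univ.filter (fun c : Fin m → ZMod 2 => hammingNorm c ≤ K)).card
              * 2 ^ (n - 1) := by
            rw [Finset.sum_congr rfl (fun c _ => hfib c), Finset.sum_const, smul_eq_mul]
        _ ≤ (∑ k ∈ Finset.range (K + 1), m.choose k) * 2 ^ (n - 1) :=
            Nat.mul_le_mul_right _ (ball_card m K)
  calc ∑ x : Fin n → ZMod 2, (Finset.univ.filter (fun t => x ≠ 0 ∧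
          hammingNorm (Matrix.vecMul x (toeplitz n m t)) ≤ K)).card
      ≤ ∑ _x : Fin n → ZMod 2, (∑ k ∈ Finset.range (K + 1), m.choose k) * 2 ^ (n - 1) :=
        Finset.sum_le_sum (fun x _ => hcard x)
    _ = 2 ^ n * ((∑ k ∈ Finset.range (K + 1), m.choose k) * 2 ^ (n - 1)) := by
        rw [Finset.sum_const, Finset.card_univ, smul_eq_mul]
        simp [Fintype.card_fun]
lemma sum_choose_le_ent (m : ℕ) (δ : ℝ) (h0 : 0 < δ) (h2 : δ ≤ 1 / 2) :
    (∑ k ∈ Finset.range (⌊δ * m⌋₊ + 1), (m.choose k : ℝ))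
      ≤ 2 ^ ((m : ℝ) * binEnt δ) := by
  have hq : 0 < 1 - δ := by linarith
  set K := ⌊δ * m⌋₊ with hKdef
  have hK : (K : ℝ) ≤ δ * m := Nat.floor_le (by positivity)
  have hKm : K ≤ m := by
    have h1 : (K : ℝ) ≤ (m : ℝ) := hK.trans (by nlinarith [Nat.cast_nonneg (α := ℝ) m])
    exact_mod_cast h1
  set A : ℝ := δ ^ (δ * (m : ℝ)) * (1 - δ) ^ ((m : ℝ) - δ * m) with hAdef
  have hA : 0 < A := by positivity
  have hfact : ∀ e : ℝ, δ ^ e * (1 - δ) ^ ((m : ℝ) - e)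
      = (1 - δ) ^ ((m : ℝ)) * (δ / (1 - δ)) ^ e := by
    intro e
    rw [Real.div_rpow h0.le hq.le, Real.rpow_sub hq]
    have h1 : ((1 : ℝ) - δ) ^ e ≠ 0 := (Real.rpow_pos_of_pos hq e).ne'
    field_simp
  have hterm : ∀ k ∈ Finset.range (K + 1), A ≤ δ ^ k * (1 - δ) ^ (m - k) := by
    intro k hk
    have hkK : k ≤ K := Nat.lt_succ_iff.mp (Finset.mem_range.mp hk)
    have hkm : k ≤ m := hkK.trans hKm
    have hk' : (k : ℝ) ≤ δ * m := le_trans (by exact_mod_cast hkK) hK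
    have hcast : ((m - k : ℕ) : ℝ) = (m : ℝ) - (k : ℝ) := by
      push_cast [hkm]; ring
    have h1 : δ ^ k * (1 - δ) ^ (m - k) = δ ^ ((k : ℕ) : ℝ) * (1 - δ) ^ ((m : ℝ) - (k : ℝ)) := by
      rw [Real.rpow_natCast, ← hcast, Real.rpow_natCast]
    rw [h1, hfact, hAdef, hfact]
    apply mul_le_mul_of_nonneg_left _ (Real.rpow_nonneg hq.le _)
    apply Real.rpow_le_rpow_of_exponent_ge (div_pos h0 hq)
    · rw [div_le_one hq]; linarith
    · exact hk'
  have hbin : ∑ k ∈ Finset.range (m + 1), (m.choose k : ℝ) * (δ ^ k * (1 - δ) ^ (m - k)) = 1 := by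
    have h := add_pow δ (1 - δ) m
    have h1 : δ + (1 - δ) = 1 := by ring
    rw [h1, one_pow] at h
    conv_rhs => rw [h]
    apply Finset.sum_congr rfl
    intro k _
    ring
  have hpartial : ∑ k ∈ Finset.range (K + 1), (m.choose k : ℝ) * (δ ^ k * (1 - δ) ^ (m - k)) ≤ 1 := by
    calc ∑ k ∈ Finset.range (K + 1), (m.choose k : ℝ) * (δ ^ k * (1 - δ) ^ (m - k))
        ≤ ∑ k ∈ Finset.range (m + 1), (m.choose k : ℝ) * (δ ^ k * (1 - δ) ^ (m - k)) := by
          apply Finset.sum_le_sum_of_subset_of_nonneg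
          · exact Finset.range_subset_range.mpr (by omega)
          · intro k _ _
            positivity
      _ = 1 := hbin
  have hmain : (∑ k ∈ Finset.range (K + 1), (m.choose k : ℝ)) * A ≤ 1 := by
    rw [Finset.sum_mul]
    refine le_trans (Finset.sum_le_sum ?_) hpartial
    intro k hk
    exact mul_le_mul_of_nonneg_left (hterm k hk) (Nat.cast_nonneg _)
  have hAeq : A = 2 ^ (-((m : ℝ) * binEnt δ)) := by
    have hpow : ∀ a : ℝ, 0 < a → ∀ e : ℝ, a ^ e = (2 : ℝ) ^ (Real.logb 2 a * e) := by
      intro a ha e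
      rw [Real.rpow_mul (by norm_num), Real.rpow_logb two_pos (by norm_num) ha]
    rw [hAdef, hpow δ h0, hpow (1 - δ) hq, ← Real.rpow_add two_pos]
    congr 1
    simp only [binEnt]
    ring
  have h2pos : (0 : ℝ) < 2 ^ (-((m : ℝ) * binEnt δ)) := Real.rpow_pos_of_pos two_pos _
  rw [hAeq] at hmain hA
  calc (∑ k ∈ Finset.range (K + 1), (m.choose k : ℝ))
      ≤ 1 / 2 ^ (-((m : ℝ) * binEnt δ)) := (le_div_iff₀ hA).mpr hmain
    _ = 2 ^ ((m : ℝ) * binEnt δ) := by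
        rw [one_div, ← Real.rpow_neg (by norm_num), neg_neg]

theorem toeplitz_GV_bound (n m : ℕ) (hnm : n < m) (δ R : ℝ)
    (hδ : δ ∈ Set.Ioo (0 : ℝ) (1 / 2)) (hR : R = (n : ℝ) / m) :
    (Nat.card {t : Fin (n + m - 1) → ZMod 2 //
        ∃ x : Fin n → ZMod 2, x ≠ 0 ∧
          ((hammingNorm (Matrix.vecMul x (toeplitz n m t)) : ℝ) ≤ δ * m)} : ℝ)
      / 2 ^ (n + m - 1)
      ≤ 2 ^ (-(m : ℝ) * (1 - binEnt δ - R)) := by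
  obtain ⟨hδ0, hδ2⟩ := hδ
  have hm : 0 < m := lt_of_le_of_lt (Nat.zero_le n) hnm
  have hmR : (m : ℝ) ≠ 0 := Nat.cast_ne_zero.mpr hm.ne'
  have hRHS : (2 : ℝ) ^ (-(m : ℝ) * (1 - binEnt δ - R))
      = 2 ^ ((n : ℝ) + (m : ℝ) * binEnt δ - m) := by
    congr 1
    rw [hR]
    field_simp
    ring
  rcases Nat.eq_zero_or_pos n with hn | hn
  · have hie : IsEmpty {t : Fin (n + m - 1) → ZMod 2 //
        ∃ x : Fin n → ZMod 2, x ≠ 0 ∧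
          ((hammingNorm (Matrix.vecMul x (toeplitz n m t)) : ℝ) ≤ δ * m)} := by
      refine ⟨fun ⟨t, x, hx, _⟩ => hx ?_⟩
      funext i
      exact absurd i.isLt (by omega)
    rw [Nat.card_of_isEmpty]
    rw [Nat.cast_zero, zero_div]
    positivity
  · set K := ⌊δ * (m : ℕ)⌋₊ with hKdef
    have hcardeq : Nat.card {t : Fin (n + m - 1) → ZMod 2 //
          ∃ x : Fin n → ZMod 2, x ≠ 0 ∧
            ((hammingNorm (Matrix.vecMul x (toeplitz n m t)) : ℝ) ≤ δ * m)}
        = Nat.card {t : Fin (n + m - 1) → ZMod 2 //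
            ∃ x : Fin n → ZMod 2, x ≠ 0 ∧
              hammingNorm (Matrix.vecMul x (toeplitz n m t)) ≤ K} := by
      apply Nat.card_congr
      apply Equiv.subtypeEquivRight
      intro t
      constructor
      · rintro ⟨x, hx, h⟩
        exact ⟨x, hx, Nat.le_floor h⟩
      · rintro ⟨x, hx, h⟩
        refine ⟨x, hx, ?_⟩
        calc (hammingNorm (Matrix.vecMul x (toeplitz n m t)) : ℝ)
            ≤ (K : ℝ) := by exact_mod_cast h
          _ ≤ δ * m := Nat.floor_le (by positivity)
    rw [hcardeq]
    have hN := card_bad_le n m hm K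
    set B : ℝ := ∑ k ∈ Finset.range (K + 1), (m.choose k : ℝ) with hBdef
    have hB0 : 0 ≤ B := Finset.sum_nonneg fun k _ => Nat.cast_nonneg _
    have hent : B ≤ 2 ^ ((m : ℝ) * binEnt δ) := sum_choose_le_ent m δ hδ0 hδ2.le
    have hpow : (0 : ℝ) < 2 ^ (n + m - 1) := by positivity
    calc (Nat.card {t : Fin (n + m - 1) → ZMod 2 //
            ∃ x : Fin n → ZMod 2, x ≠ 0 ∧
              hammingNorm (Matrix.vecMul x (toeplitz n m t)) ≤ K} : ℝ) / 2 ^ (n + m - 1)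
        ≤ ((2 : ℝ) ^ n * (B * 2 ^ (n - 1))) / 2 ^ (n + m - 1) := by
          gcongr
          calc (Nat.card {t : Fin (n + m - 1) → ZMod 2 //
                  ∃ x : Fin n → ZMod 2, x ≠ 0 ∧
                    hammingNorm (Matrix.vecMul x (toeplitz n m t)) ≤ K} : ℝ)
              ≤ ((2 ^ n * ((∑ k ∈ Finset.range (K + 1), m.choose k) * 2 ^ (n - 1)) : ℕ) : ℝ) := by
                exact_mod_cast hN
            _ = (2 : ℝ) ^ n * (B * 2 ^ (n - 1)) := by push_cast; ring
      _ = B * 2 ^ n / 2 ^ m := by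
          have hsp : (2 : ℝ) ^ (n + m - 1) = 2 ^ (n - 1) * 2 ^ m := by
            rw [← pow_add]; congr 1; omega
          rw [hsp]
          have h1 : ((2 : ℝ) ^ (n - 1)) ≠ 0 := by positivity
          field_simp
      _ ≤ 2 ^ ((m : ℝ) * binEnt δ) * 2 ^ n / 2 ^ m := by gcongr
      _ = 2 ^ (-(m : ℝ) * (1 - binEnt δ - R)) := by
          rw [hRHS]
          rw [show ((2 : ℝ) ^ n) = (2 : ℝ) ^ ((n : ℕ) : ℝ) from (Real.rpow_natCast 2 n).symm,
            show ((2 : ℝ) ^ m) = (2 : ℝ) ^ ((m : ℕ) : ℝ) from (Real.rpow_natCast 2 m).symm,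
            ← Real.rpow_add two_pos, ← Real.rpow_sub two_pos]
          congr 1
          ring
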